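/- Let p be prime and H = k[∂]/(∂^p) over a field k of characteristic p, with graded modules Ṽ_i (0 ≤ i ≤ p-1) of dimension i+1 given by basis w_0,...,w_i, ∂(w_j) = w_{j+1}, ∂(w_i) = 0. Then for 0 ≤ i ≤ p-2 the tensor product Ṽ_1 ⊗ Ṽ_i decomposes as an H-module: Ṽ_1 ⊗ Ṽ_i ≅ Ṽ_{i+1} ⊕ Ṽ_{i-1} if 1 ≤ i ≤ p-2, and Ṽ_1 ⊗ Ṽ_0 ≅ Ṽ_1, where ∂ acts on a tensor product by the Leibniz rule ∂(x⊗y) = ∂x⊗y + x⊗∂y (ignoring the internal grading). -/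
import Mathlib

open scoped TensorProduct

section Aux

variable (k : Type*) [Field k]

/-- basis vector of `Fin (n+1) → k`, with out-of-range index giving `0`. -/
noncomputable def vecE (n a : ℕ) : Fin (n + 1) → k :=
  if h : a < n + 1 then Pi.single (⟨a, h⟩ : Fin (n + 1)) 1 else 0

lemma vecE_of_ge {n a : ℕ} (h : ¬ a < n + 1) : vecE k n a = 0 := dif_neg h

variable {k}

lemma dVec (D : ∀ m : ℕ, Module.End k (Fin (m + 1) → k))
    (hD : ∀ (m : ℕ) (j : Fin (m + 1)), D m (Pi.single j 1) =
      if h : (j : ℕ) + 1 < m + 1 then Pi.single (⟨(j : ℕ) + 1, h⟩ : Fin (m + 1)) 1 else 0)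
    (m a : ℕ) : D m (vecE k m a) = vecE k m (a + 1) := by
  unfold vecE
  by_cases h : a < m + 1
  · rw [dif_pos h, hD]
  · rw [dif_neg h, dif_neg (by omega)]; exact map_zero _

variable (k)

noncomputable def Xv (i' j : ℕ) : (Fin 2 → k) ⊗[k] (Fin (i' + 2) → k) :=
  vecE k 1 0 ⊗ₜ[k] vecE k (i' + 1) j + (j : k) • (vecE k 1 1 ⊗ₜ[k] vecE k (i' + 1) (j - 1))

noncomputable def Yv (i' j : ℕ) : (Fin 2 → k) ⊗[k] (Fin (i' + 2) → k) :=
  vecE k 1 0 ⊗ₜ[k] vecE k (i' + 1) (j + 1) +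
    ((j : k) - ((i' + 1 : ℕ) : k)) • (vecE k 1 1 ⊗ₜ[k] vecE k (i' + 1) j)

variable {k}

lemma dX (D : ∀ m : ℕ, Module.End k (Fin (m + 1) → k))
    (hD : ∀ (m : ℕ) (j : Fin (m + 1)), D m (Pi.single j 1) =
      if h : (j : ℕ) + 1 < m + 1 then Pi.single (⟨(j : ℕ) + 1, h⟩ : Fin (m + 1)) 1 else 0)
    (i' j : ℕ) :
    (LinearMap.rTensor (Fin (i' + 2) → k) (D 1) + LinearMap.lTensor (Fin 2 → k) (D (i' + 1)))
      (Xv k i' j) = Xv k i' (j + 1) := by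
  have h1 : D 1 (vecE k 1 0) = vecE k 1 1 := by rw [dVec D hD]
  have h2 : vecE k 1 2 = 0 := vecE_of_ge k (by omega)
  rcases j with _ | j
  · simp only [Xv, Nat.cast_zero, zero_smul, add_zero, map_add, LinearMap.add_apply,
      LinearMap.rTensor_tmul, LinearMap.lTensor_tmul, dVec D hD, h1, h2,
      Nat.zero_add, Nat.add_sub_cancel]
    push_cast
    module
  · simp only [Xv, map_add, map_smul, LinearMap.add_apply, LinearMap.rTensor_tmul,
      LinearMap.lTensor_tmul, dVec D hD, h1, h2, TensorProduct.zero_tmul, Nat.add_sub_cancel,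
      smul_zero, zero_add, add_zero]
    push_cast
    module

lemma dY (D : ∀ m : ℕ, Module.End k (Fin (m + 1) → k))
    (hD : ∀ (m : ℕ) (j : Fin (m + 1)), D m (Pi.single j 1) =
      if h : (j : ℕ) + 1 < m + 1 then Pi.single (⟨(j : ℕ) + 1, h⟩ : Fin (m + 1)) 1 else 0)
    (i' j : ℕ) :
    (LinearMap.rTensor (Fin (i' + 2) → k) (D 1) + LinearMap.lTensor (Fin 2 → k) (D (i' + 1)))
      (Yv k i' j) = Yv k i' (j + 1) := by
  have h1 : D 1 (vecE k 1 0) = vecE k 1 1 := by rw [dVec D hD]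
  have h2 : vecE k 1 2 = 0 := vecE_of_ge k (by omega)
  simp only [Yv, map_add, map_smul, LinearMap.add_apply, LinearMap.rTensor_tmul,
    LinearMap.lTensor_tmul, dVec D hD, h1, h2, TensorProduct.zero_tmul,
    smul_zero, zero_add, add_zero]
  push_cast
  module

lemma Xtop (i' : ℕ) : Xv k i' (i' + 3) = 0 := by
  have h1 : vecE k (i' + 1) (i' + 3) = 0 := vecE_of_ge k (by omega)
  have h2 : vecE k (i' + 1) (i' + 3 - 1) = 0 := vecE_of_ge k (by omega)
  have h3 : vecE k (i' + 1) (i' + 2) = 0 := vecE_of_ge k (by omega)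
  simp [Xv, h1, h2, h3]

lemma Ytop (i' : ℕ) : Yv k i' (i' + 1) = 0 := by
  have h1 : vecE k (i' + 1) (i' + 1 + 1) = 0 := vecE_of_ge k (by omega)
  simp [Yv, h1]

variable (k)

noncomputable def gmap (i' : ℕ) :
    ((Fin (i' + 3) → k) × (Fin (i' + 1) → k)) →ₗ[k] ((Fin 2 → k) ⊗[k] (Fin (i' + 2) → k)) :=
  LinearMap.coprod
    (∑ j : Fin (i' + 3), (LinearMap.proj j).smulRight (Xv k i' (j : ℕ)))
    (∑ j : Fin (i' + 1), (LinearMap.proj j).smulRight (Yv k i' (j : ℕ)))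

lemma gmap_single1 (i' : ℕ) (j : Fin (i' + 3)) :
    gmap k i' (Pi.single j 1, 0) = Xv k i' (j : ℕ) := by
  simp [gmap, LinearMap.sum_apply, Pi.single_apply, ite_smul, Finset.sum_ite_eq']

lemma gmap_single2 (i' : ℕ) (j : Fin (i' + 1)) :
    gmap k i' (0, Pi.single j 1) = Yv k i' (j : ℕ) := by
  simp [gmap, LinearMap.sum_apply, Pi.single_apply, ite_smul, Finset.sum_ite_eq']

end Aux

lemma g_comm {k : Type*} [Field k] (D : ∀ m : ℕ, Module.End k (Fin (m + 1) → k))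
    (hD : ∀ (m : ℕ) (j : Fin (m + 1)), D m (Pi.single j 1) =
      if h : (j : ℕ) + 1 < m + 1 then Pi.single (⟨(j : ℕ) + 1, h⟩ : Fin (m + 1)) 1 else 0)
    (i' : ℕ) :
    (LinearMap.rTensor (Fin (i' + 2) → k) (D 1) + LinearMap.lTensor (Fin 2 → k) (D (i' + 1)))
      ∘ₗ gmap k i' = gmap k i' ∘ₗ LinearMap.prodMap (D (i' + 2)) (D i') := by
  apply LinearMap.prod_ext
  · apply Module.Basis.ext (Pi.basisFun k (Fin (i' + 3)))
    intro j
    simp only [Pi.basisFun_apply, LinearMap.comp_apply, LinearMap.inl_apply,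
      LinearMap.prodMap_apply, Prod.map_apply]
    rw [gmap_single1, dX D hD, map_zero (D i'), hD]
    by_cases h : (j : ℕ) + 1 < i' + 3
    · rw [dif_pos h]
      exact (gmap_single1 k i' ⟨(j : ℕ) + 1, h⟩).symm
    · rw [dif_neg h]
      have hj : (j : ℕ) + 1 = i' + 3 := by omega
      rw [hj, Xtop]
      exact ((gmap k i').map_zero).symm
  · apply Module.Basis.ext (Pi.basisFun k (Fin (i' + 1)))
    intro j
    simp only [Pi.basisFun_apply, LinearMap.comp_apply, LinearMap.inr_apply,
      LinearMap.prodMap_apply, Prod.map_apply]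
    rw [gmap_single2, dY D hD, map_zero (D (i' + 2)), hD]
    by_cases h : (j : ℕ) + 1 < i' + 1
    · rw [dif_pos h]
      exact (gmap_single2 k i' ⟨(j : ℕ) + 1, h⟩).symm
    · rw [dif_neg h]
      have hj : (j : ℕ) + 1 = i' + 1 := by omega
      rw [hj, Ytop]
      exact ((gmap k i').map_zero).symm

/-- Clebsch–Gordan-type decomposition for `H = k[∂]/(∂^p)`: writing `Ṽ_m` for the
`(m+1)`-dimensional indecomposable `H`-module (a single Jordan block for `∂`), for
`1 ≤ i ≤ p-2` there is an isomorphism `Ṽ_1 ⊗ Ṽ_i ≅ Ṽ_{i+1} ⊕ Ṽ_{i-1}` intertwining the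
tensor-product differential `∂(x⊗y) = ∂x⊗y + x⊗∂y`, and `Ṽ_1 ⊗ Ṽ_0 ≅ Ṽ_1`. -/
theorem tensor_decomposition_H_modules (p : ℕ) (hp : p.Prime)
    (k : Type*) [Field k] [CharP k p]
    (D : ∀ m : ℕ, Module.End k (Fin (m + 1) → k))
    (hD : ∀ (m : ℕ) (j : Fin (m + 1)), D m (Pi.single j 1) =
      if h : (j : ℕ) + 1 < m + 1 then Pi.single (⟨(j : ℕ) + 1, h⟩ : Fin (m + 1)) 1 else 0) :
    (∀ i' : ℕ, i' + 1 ≤ p - 2 →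
      ∃ f : ((Fin 2 → k) ⊗[k] (Fin (i' + 2) → k)) ≃ₗ[k] ((Fin (i' + 3) → k) × (Fin (i' + 1) → k)),
        ∀ x, f ((LinearMap.rTensor (Fin (i' + 2) → k) (D 1) +
                  LinearMap.lTensor (Fin 2 → k) (D (i' + 1))) x) =
          ((D (i' + 2)) (f x).1, (D i') (f x).2)) ∧
    (∃ f : ((Fin 2 → k) ⊗[k] (Fin 1 → k)) ≃ₗ[k] (Fin 2 → k),
        ∀ x, f ((LinearMap.rTensor (Fin 1 → k) (D 1) +
                  LinearMap.lTensor (Fin 2 → k) (D 0)) x) = (D 1) (f x)) := by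
  constructor
  · intro i' hi'
    have hp2 : 2 ≤ p := hp.two_le
    have hc : ((i' + 2 : ℕ) : k) ≠ 0 := by
      intro h
      have h2 := (CharP.cast_eq_zero_iff k p (i' + 2)).mp h
      have h3 := Nat.le_of_dvd (by omega) h2
      omega
    have hXn : ∀ j : ℕ, j < i' + 3 → Xv k i' j ∈ LinearMap.range (gmap k i') := by
      intro j h
      exact ⟨(Pi.single (⟨j, h⟩ : Fin (i' + 3)) 1, 0), gmap_single1 k i' ⟨j, h⟩⟩
    have hYn : ∀ j : ℕ, j < i' + 2 → Yv k i' j ∈ LinearMap.range (gmap k i') := by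
      intro j h
      rcases Nat.lt_or_ge j (i' + 1) with h' | h'
      · exact ⟨(0, Pi.single (⟨j, h'⟩ : Fin (i' + 1)) 1), gmap_single2 k i' ⟨j, h'⟩⟩
      · have : j = i' + 1 := by omega
        rw [this, Ytop]
        exact Submodule.zero_mem _
    have hE1 : ∀ j : ℕ, j < i' + 2 →
        vecE k 1 1 ⊗ₜ[k] vecE k (i' + 1) j ∈ LinearMap.range (gmap k i') := by
      intro j hj
      have key : Xv k i' (j + 1) - Yv k i' j =
          ((i' + 2 : ℕ) : k) • (vecE k 1 1 ⊗ₜ[k] vecE k (i' + 1) j) := by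
        simp only [Xv, Yv, Nat.add_sub_cancel]
        push_cast
        module
      have h2 : vecE k 1 1 ⊗ₜ[k] vecE k (i' + 1) j =
          ((i' + 2 : ℕ) : k)⁻¹ • (Xv k i' (j + 1) - Yv k i' j) := by
        rw [key, inv_smul_smul₀ hc]
      rw [h2]
      exact Submodule.smul_mem _ _
        (Submodule.sub_mem _ (hXn (j + 1) (by omega)) (hYn j hj))
    have hE0 : ∀ j : ℕ, j < i' + 2 →
        vecE k 1 0 ⊗ₜ[k] vecE k (i' + 1) j ∈ LinearMap.range (gmap k i') := by
      intro j hj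
      have key : vecE k 1 0 ⊗ₜ[k] vecE k (i' + 1) j =
          Xv k i' j - (j : k) • (vecE k 1 1 ⊗ₜ[k] vecE k (i' + 1) (j - 1)) := by
        simp [Xv]
      rw [key]
      exact Submodule.sub_mem _ (hXn j (by omega))
        (Submodule.smul_mem _ _ (hE1 (j - 1) (by omega)))
    have hsurj : Function.Surjective (gmap k i') := by
      rw [← LinearMap.range_eq_top, eq_top_iff,
        ← Module.Basis.span_eq ((Pi.basisFun k (Fin 2)).tensorProduct (Pi.basisFun k (Fin (i' + 2)))),
        Submodule.span_le]
      rintro x ⟨⟨a, j⟩, rfl⟩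
      rw [Module.Basis.tensorProduct_apply, Pi.basisFun_apply, Pi.basisFun_apply]
      have ha : (Pi.single a 1 : Fin 2 → k) = vecE k 1 (a : ℕ) := by
        rw [vecE, dif_pos a.isLt]
      have hjj : (Pi.single j 1 : Fin (i' + 2) → k) = vecE k (i' + 1) (j : ℕ) := by
        rw [vecE, dif_pos j.isLt]
      rw [ha, hjj]
      fin_cases a
      · exact hE0 j j.isLt
      · exact hE1 j j.isLt
    have hdim : Module.finrank k ((Fin (i' + 3) → k) × (Fin (i' + 1) → k)) =
        Module.finrank k ((Fin 2 → k) ⊗[k] (Fin (i' + 2) → k)) := by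
      simp [Module.finrank_tensorProduct]
      ring
    have hinj : Function.Injective (gmap k i') :=
      (LinearMap.injective_iff_surjective_of_finrank_eq_finrank hdim).mpr hsurj
    let e := LinearEquiv.ofBijective (gmap k i') ⟨hinj, hsurj⟩
    refine ⟨e.symm, fun x => ?_⟩
    have hcomm := g_comm D hD i'
    have hsy : ∀ z, e.symm (gmap k i' z) = z := by
      intro z
      have hz : gmap k i' z = e z := rfl
      rw [hz, e.symm_apply_apply]
    have hx : gmap k i' (e.symm x) = x := e.apply_symm_apply x
    have h1 : (LinearMap.rTensor (Fin (i' + 2) → k) (D 1) +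
        LinearMap.lTensor (Fin 2 → k) (D (i' + 1))) x =
        gmap k i' (LinearMap.prodMap (D (i' + 2)) (D i') (e.symm x)) := by
      conv_lhs => rw [← hx]
      exact LinearMap.congr_fun hcomm (e.symm x)
    rw [h1, hsy]
    rfl
  · have hD0 : D 0 = 0 := by
      apply Module.Basis.ext (Pi.basisFun k (Fin 1))
      intro j
      rw [Pi.basisFun_apply, hD, dif_neg (by omega)]
      rfl
    refine ⟨(TensorProduct.congr (LinearEquiv.refl k (Fin 2 → k))
      (LinearEquiv.funUnique (Fin 1) k k)).trans (TensorProduct.rid k (Fin 2 → k)), fun x => ?_⟩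
    have key : (((TensorProduct.congr (LinearEquiv.refl k (Fin 2 → k))
        (LinearEquiv.funUnique (Fin 1) k k)).trans
          (TensorProduct.rid k (Fin 2 → k))).toLinearMap ∘ₗ
        (LinearMap.rTensor (Fin 1 → k) (D 1) + LinearMap.lTensor (Fin 2 → k) (D 0))) =
        ((D 1 : Module.End k (Fin 2 → k)) ∘ₗ
          ((TensorProduct.congr (LinearEquiv.refl k (Fin 2 → k))
            (LinearEquiv.funUnique (Fin 1) k k)).trans
              (TensorProduct.rid k (Fin 2 → k))).toLinearMap) := by
      apply TensorProduct.ext'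
      intro u v
      simp [hD0, TensorProduct.rid_tmul, map_smul]
    exact LinearMap.congr_fun key x
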